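/- Let 1 ≤ p ≤ ∞ and let f ∈ L^p([0,1]) with ∫₀¹ f(u) du = 0. Then for any integers n ≥ 0 and m ≥ 1, ‖𝔼(f(m·) | ℱ_n)‖_p ≤ (2^n/m) ‖f‖_p, where f(m·) denotes the function x ↦ f(mx) on [0,1] (f being extended 1-periodically). -/

import Mathlib

open MeasureTheory Filter ENNReal



private lemma perInt {f : ℝ → ℝ} (hper : Function.Periodic f 1)
    (h : IntegrableOn f (Set.Ioc 0 1) volume) (a b : ℝ) :
    IntervalIntegrable f volume a b := by
  haveI : VAddInvariantMeasure (AddSubgroup.zmultiples (1:ℝ)) ℝ volume :=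
    ⟨fun c s _ => measure_preimage_add _ _ _⟩
  have h1 : ∀ t : ℝ, IntegrableOn f (Set.Ioc t (t+1)) volume := by
    intro t
    have key : IntegrableOn f (Set.Ioc t (t+1)) volume ↔
        IntegrableOn f (Set.Ioc 0 (0+1)) volume := by
      apply IsAddFundamentalDomain.integrableOn_iff (G := AddSubgroup.zmultiples (1:ℝ))
      exacts [isAddFundamentalDomain_Ioc one_pos t, isAddFundamentalDomain_Ioc one_pos 0,
        hper.map_vadd_zmultiples]
    rw [key]
    simpa using h
  have h2 : ∀ (t : ℝ) (j : ℕ), IntegrableOn f (Set.Ioc t (t + j)) volume := by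
    intro t j
    induction j with
    | zero => simp
    | succ j ih =>
      have hsub : Set.Ioc t (t + (j+1 : ℕ)) ⊆ Set.Ioc t (t + j) ∪ Set.Ioc (t + j) (t + j + 1) := by
        push_cast
        rw [Set.Ioc_union_Ioc_eq_Ioc (by linarith) (by linarith)]
        intro x hx
        exact ⟨hx.1, by linarith [hx.2]⟩
      exact ((ih.union (h1 (t + j))).mono_set hsub)
  have aux : ∀ a b : ℝ, IntegrableOn f (Set.Ioc a b) volume := by
    intro a b
    refine (h2 a ⌈b - a⌉₊).mono_set (Set.Ioc_subset_Ioc_right ?_)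
    linarith [Nat.le_ceil (b - a)]
  exact ⟨aux a b, aux b a⟩

private lemma perLe {F : ℝ → ℝ≥0∞} (hper : Function.Periodic F 1) {b θ : ℝ} (hθ : θ ≤ 1) :
    ∫⁻ x in Set.Ioc b (b + θ), F x ≤ ∫⁻ x in Set.Ioc 0 1, F x := by
  haveI : VAddInvariantMeasure (AddSubgroup.zmultiples (1:ℝ)) ℝ volume :=
    ⟨fun c s _ => measure_preimage_add _ _ _⟩
  calc ∫⁻ x in Set.Ioc b (b+θ), F x ≤ ∫⁻ x in Set.Ioc b (b+1), F x :=
        lintegral_mono_set (Set.Ioc_subset_Ioc_right (by linarith))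
    _ = ∫⁻ x in Set.Ioc 0 (0+1), F x := by
        apply IsAddFundamentalDomain.setLIntegral_eq (G := AddSubgroup.zmultiples (1:ℝ))
        exacts [isAddFundamentalDomain_Ioc one_pos b, isAddFundamentalDomain_Ioc one_pos 0,
          hper.map_vadd_zmultiples]
    _ = _ := by rw [zero_add]

private lemma perAE {f : ℝ → ℝ} (hper : Function.Periodic f 1) :
    ∀ᵐ x ∂(volume : Measure ℝ),
      (‖f x‖₊ : ℝ≥0∞) ≤ eLpNormEssSup f (volume.restrict (Set.Ioc (0:ℝ) 1)) := by
  set E := eLpNormEssSup f (volume.restrict (Set.Ioc (0:ℝ) 1)) with hE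
  have h0 : ∀ᵐ x ∂(volume.restrict (Set.Ioc (0:ℝ) 1)), (‖f x‖₊:ℝ≥0∞) ≤ E :=
    ae_le_eLpNormEssSup
  set Bad : Set ℝ := {x | ¬ ((‖f x‖₊:ℝ≥0∞) ≤ E)} with hBad
  have hB : volume (Bad ∩ Set.Ioc (0:ℝ) 1) = 0 := by
    have := ae_iff.1 h0
    rwa [Measure.restrict_apply' measurableSet_Ioc] at this
  have hsub : Bad ⊆ ⋃ k : ℤ, (fun x : ℝ => x + k) ⁻¹' (Bad ∩ Set.Ioc (0:ℝ) 1) := by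
    intro x hx
    refine Set.mem_iUnion.2 ⟨1 - ⌈x⌉, ?_, ?_⟩
    · have h2 := (hper.zsmul (1 - ⌈x⌉)) x
      simp only [zsmul_eq_mul, mul_one] at h2
      show ¬ ((‖f (x + ((1 - ⌈x⌉ : ℤ):ℝ))‖₊ : ℝ≥0∞) ≤ E)
      rw [h2]
      exact hx
    · push_cast
      constructor
      · linarith [Int.ceil_lt_add_one x]
      · linarith [Int.le_ceil x]
  have : volume Bad = 0 := by
    refine measure_mono_null hsub (measure_iUnion_null fun k => ?_)
    rw [measure_preimage_add_right]
    exact hB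
  exact ae_iff.2 this


private lemma dyadic_cover (n : ℕ) :
    Set.Ioc (0:ℝ) 1 = ⋃ k ∈ Finset.range (2^n),
      Set.Ioc ((k : ℝ) / 2 ^ n) (((k : ℝ) + 1) / 2 ^ n) := by
  have hN : (0:ℝ) < 2^n := by positivity
  ext x
  simp only [Set.mem_iUnion, Finset.mem_range, Set.mem_Ioc, exists_prop]
  constructor
  · rintro ⟨hx0, hx1⟩
    have hxN : 0 < x * 2^n := by positivity
    set K := ⌈x * 2^n⌉₊ with hK
    have hK1 : 1 ≤ K := Nat.one_le_iff_ne_zero.2 (by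
      intro h0
      have := Nat.ceil_eq_zero.1 h0
      linarith)
    have hKle : x * 2^n ≤ (K:ℝ) := Nat.le_ceil _
    have hKlt : (K:ℝ) < x * 2^n + 1 := by
      rw [hK]; exact Nat.ceil_lt_add_one (le_of_lt hxN)
    have hKN : K ≤ 2^n := by
      refine Nat.ceil_le.2 ?_
      have h2 : x * 2^n ≤ 2^n := by nlinarith
      exact_mod_cast h2
    have hc : ((K - 1 : ℕ) : ℝ) = (K:ℝ) - 1 := by
      have : ((K - 1 : ℕ) : ℝ) = (K:ℝ) - ((1:ℕ):ℝ) := Nat.cast_sub hK1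
      simpa using this
    refine ⟨K - 1, by omega, ?_, ?_⟩
    · rw [hc, div_lt_iff₀ hN]; linarith
    · rw [hc]
      have he : (K:ℝ) - 1 + 1 = K := by ring
      rw [he, le_div_iff₀ hN]
      exact hKle
  · rintro ⟨k, hk, h1, h2⟩
    have hk' : (k:ℝ) + 1 ≤ 2^n := by
      have : (k:ℝ) + 1 ≤ ((2^n : ℕ) : ℝ) := by exact_mod_cast Nat.succ_le_of_lt hk
      simpa using this
    constructor
    · exact lt_of_le_of_lt (by positivity) h1
    · calc x ≤ ((k:ℝ)+1)/2^n := h2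
        _ ≤ 1 := by rw [div_le_one hN]; exact hk'

private lemma dyadic_disj (n : ℕ) : Set.PairwiseDisjoint (↑(Finset.range (2^n)))
    (fun k : ℕ => Set.Ioc ((k : ℝ) / 2 ^ n) (((k : ℝ) + 1) / 2 ^ n)) := by
  have hN : (0:ℝ) < 2^n := by positivity
  have key : ∀ a b : ℕ, a < b →
      Disjoint (Set.Ioc ((a : ℝ) / 2 ^ n) (((a : ℝ) + 1) / 2 ^ n))
        (Set.Ioc ((b : ℝ) / 2 ^ n) (((b : ℝ) + 1) / 2 ^ n)) := by
    intro a b hab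
    refine Set.Ioc_disjoint_Ioc.2 ?_
    have h1 : ((a:ℝ)+1)/2^n ≤ (b:ℝ)/2^n := by
      have : (a:ℝ) + 1 ≤ b := by exact_mod_cast hab
      gcongr
    calc min (((a:ℝ)+1)/2^n) (((b:ℝ)+1)/2^n) ≤ ((a:ℝ)+1)/2^n := min_le_left _ _
      _ ≤ (b:ℝ)/2^n := h1
      _ ≤ max ((a:ℝ)/2^n) ((b:ℝ)/2^n) := le_max_right _ _
  intro j hj k hk hjk
  rcases hjk.lt_or_gt with h | h
  · exact key _ _ h
  · exact (key _ _ h).symm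

/-- `ℱ_n`: the σ-algebra generated by the dyadic intervals of generation `n` in `[0,1]`. -/
def dyadicSigma (n : ℕ) : MeasurableSpace ℝ :=
  MeasurableSpace.generateFrom
    {s : Set ℝ | ∃ k : ℕ, k < 2 ^ n ∧ s = Set.Ioc ((k : ℝ) / 2 ^ n) (((k : ℝ) + 1) / 2 ^ n)}

set_option maxHeartbeats 1000000 in
/-- **Lemma (contraction for dilations).** For `1 ≤ p ≤ ∞` and `f ∈ L^p([0,1])` 1-periodic
with `∫₀¹ f = 0`, and integers `n ≥ 0`, `m ≥ 1`, one has
`‖𝔼(f(m·) | ℱ_n)‖_p ≤ (2ⁿ/m) ‖f‖_p`. -/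
theorem stmt16 (p : ℝ≥0∞) (hp : 1 ≤ p)
    (f : ℝ → ℝ) (hper : Function.Periodic f 1)
    (hf : MemLp f p (MeasureTheory.volume.restrict (Set.Ioc (0 : ℝ) 1)))
    (hmean : ∫ x in Set.Ioc (0 : ℝ) 1, f x = 0)
    (n : ℕ) (m : ℕ) (hm : 1 ≤ m) :
    eLpNorm
        ((MeasureTheory.volume.restrict (Set.Ioc (0 : ℝ) 1))[(fun x => f ((m : ℝ) * x)) |
          dyadicSigma n]) p
        (MeasureTheory.volume.restrict (Set.Ioc (0 : ℝ) 1)) ≤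
      ENNReal.ofReal ((2 : ℝ) ^ n / (m : ℝ)) *
        eLpNorm f p (MeasureTheory.volume.restrict (Set.Ioc (0 : ℝ) 1)) := by
  classical
  set μ := MeasureTheory.volume.restrict (Set.Ioc (0 : ℝ) 1) with hμdef
  set g : ℝ → ℝ := fun x => f ((m : ℝ) * x) with hgdef
  have hN0 : (0:ℝ) < 2^n := by positivity
  have hm0 : (0:ℝ) < m := by exact_mod_cast hm
  have hmne : (m:ℝ) ≠ 0 := ne_of_gt hm0
  -- σ-algebra facts
  have hle : dyadicSigma n ≤ (inferInstance : MeasurableSpace ℝ) := by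
    apply MeasurableSpace.generateFrom_le
    rintro s ⟨k, hk, rfl⟩; exact measurableSet_Ioc
  haveI hfin : IsFiniteMeasure μ := by
    constructor
    rw [hμdef, Measure.restrict_apply_univ, Real.volume_Ioc]
    simp
  haveI : SigmaFinite (μ.trim hle) := by
    have : IsFiniteMeasure (μ.trim hle) := by
      constructor
      rw [trim_measurableSet_eq hle MeasurableSet.univ]
      exact measure_lt_top μ _
    infer_instance
  -- integrability of f
  have hp0 : p ≠ 0 := (lt_of_lt_of_le zero_lt_one hp).ne'
  have hf1 : Integrable f μ := hf.integrable hp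
  have hIf : ∀ a b : ℝ, IntervalIntegrable f volume a b := perInt hper hf1
  have hg1 : Integrable g μ := by
    have h2 := (hIf 0 (m : ℝ)).comp_mul_left (c := (m:ℝ))
    rw [zero_div, div_self hmne] at h2
    exact h2.1
  -- constants
  set L : ℝ := (m:ℝ) / 2^n with hLdef
  have hL0 : 0 ≤ L := by positivity
  set M : ℕ := ⌊L⌋₊ with hMdef
  set θ : ℝ := L - M with hθdef
  have hθ0 : 0 ≤ θ := by
    have := Nat.floor_le hL0
    simp only [hθdef]; linarith
  have hθ1 : θ ≤ 1 := by
    have := Nat.lt_floor_add_one L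
    simp only [hθdef]; linarith
  set c : ℕ → ℝ := fun k =>
    2^n * ∫ x in Set.Ioc ((k : ℝ) / 2 ^ n) (((k : ℝ) + 1) / 2 ^ n), g x with hcdef
  set b : ℕ → ℝ := fun k => (m:ℝ) * ((k:ℝ)/2^n) + M with hbdef
  set h : ℝ → ℝ := fun x => ∑ k ∈ Finset.range (2^n),
    (Set.Ioc ((k : ℝ) / 2 ^ n) (((k : ℝ) + 1) / 2 ^ n)).indicator (fun _ => c k) x with hhdef
  -- atoms
  have hIk_meas : ∀ k : ℕ, MeasurableSet (Set.Ioc ((k : ℝ) / 2 ^ n) (((k : ℝ) + 1) / 2 ^ n)) :=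
    fun k => measurableSet_Ioc
  have hIk_sub : ∀ k : ℕ, k < 2^n →
      Set.Ioc ((k : ℝ) / 2 ^ n) (((k : ℝ) + 1) / 2 ^ n) ⊆ Set.Ioc (0:ℝ) 1 := by
    intro k hk
    apply Set.Ioc_subset_Ioc
    · positivity
    · rw [div_le_one hN0]
      have : (k:ℝ) + 1 ≤ ((2^n : ℕ) : ℝ) := by exact_mod_cast Nat.succ_le_of_lt hk
      simpa using this
  have hatom : ∀ k ∈ Finset.range (2^n),
      Set.EqOn h (fun _ => c k) (Set.Ioc ((k : ℝ) / 2 ^ n) (((k : ℝ) + 1) / 2 ^ n)) := by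
    intro k hk x hx
    show (∑ j ∈ Finset.range (2^n), _) = _
    rw [Finset.sum_eq_single k]
    · exact Set.indicator_of_mem hx _
    · intro j hj hjk
      refine Set.indicator_of_notMem (fun hxj => ?_) _
      exact Set.disjoint_left.1 (dyadic_disj n hj hk hjk) hxj hx
    · intro hk'; exact absurd hk hk'
  have hvolI : ∀ k : ℕ,
      volume (Set.Ioc ((k : ℝ) / 2 ^ n) (((k : ℝ) + 1) / 2 ^ n)) = ENNReal.ofReal ((2^n : ℝ)⁻¹) := by
    intro k
    rw [Real.volume_Ioc]
    congr 1
    field_simp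
    ring
  have hμI : ∀ k : ℕ, k < 2^n → μ.restrict (Set.Ioc ((k : ℝ) / 2 ^ n) (((k : ℝ) + 1) / 2 ^ n))
      = volume.restrict (Set.Ioc ((k : ℝ) / 2 ^ n) (((k : ℝ) + 1) / 2 ^ n)) := by
    intro k hk
    rw [hμdef, Measure.restrict_restrict (hIk_meas k),
      Set.inter_eq_self_of_subset_left (hIk_sub k hk)]
  have hIntH : Integrable h μ := by
    apply integrable_finset_sum
    intro k hk
    exact (integrable_const (c k)).indicator (hIk_meas k)
  have hck : ∀ k : ℕ, c k = ((2:ℝ)^n / m) * ∫ x in (b k)..(b k + θ), f x := by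
    intro k
    have e0 : (k:ℝ)/2^n ≤ ((k:ℝ)+1)/2^n := by gcongr; linarith
    have e2 : (∫ x in ((k:ℝ)/2^n)..(((k:ℝ)+1)/2^n), f ((m:ℝ) * x))
        = (m:ℝ)⁻¹ • ∫ x in ((m:ℝ)*((k:ℝ)/2^n))..((m:ℝ)*(((k:ℝ)+1)/2^n)), f x :=
      intervalIntegral.integral_comp_mul_left f hmne
    have e3 : (m:ℝ)*(((k:ℝ)+1)/2^n) = (m:ℝ)*((k:ℝ)/2^n) + L := by rw [hLdef]; ring
    set B := (m:ℝ)*((k:ℝ)/2^n) with hB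
    have e4 : (∫ x in B..(B+L), f x)
        = (∫ x in B..(B+(M:ℝ)), f x) + ∫ x in (B+(M:ℝ))..(B+L), f x :=
      (intervalIntegral.integral_add_adjacent_intervals (hIf _ _) (hIf _ _)).symm
    have e5 : (∫ x in B..(B+(M:ℝ)), f x) = 0 := by
      have h01 : (∫ x in B..(B+1), f x) = 0 := by
        rw [hper.intervalIntegral_add_eq B 0, zero_add,
          intervalIntegral.integral_of_le zero_le_one]
        exact hmean
      have h02 := hper.intervalIntegral_add_zsmul_eq (M:ℤ) B hIf
      rw [h01, smul_zero] at h02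
      simpa using h02
    have e6 : B + L = (B + (M:ℝ)) + θ := by rw [hθdef]; ring
    have e7 : b k = B + (M:ℝ) := by rw [hbdef]
    calc c k = 2^n * ∫ x in Set.Ioc ((k : ℝ) / 2 ^ n) (((k : ℝ) + 1) / 2 ^ n), g x := by
          rw [hcdef]
      _ = 2^n * ∫ x in ((k:ℝ)/2^n)..(((k:ℝ)+1)/2^n), f ((m:ℝ) * x) := by
          rw [intervalIntegral.integral_of_le e0]
      _ = 2^n * ((m:ℝ)⁻¹ • ∫ x in B..(B+L), f x) := by rw [e2, e3]
      _ = 2^n * ((m:ℝ)⁻¹ • ((∫ x in B..(B+(M:ℝ)), f x) + ∫ x in (B+(M:ℝ))..(B+L), f x)) := by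
          rw [← e4]
      _ = 2^n * ((m:ℝ)⁻¹ • ∫ x in (B+(M:ℝ))..((B+(M:ℝ))+θ), f x) := by rw [e5, ← e6, zero_add]
      _ = ((2:ℝ)^n / m) * ∫ x in (b k)..(b k + θ), f x := by
          rw [e7, smul_eq_mul]; ring
  -- step values integrate correctly on atoms
  have hbasic : ∀ k ∈ Finset.range (2^n),
      (∫ x in Set.Ioc ((k : ℝ) / 2 ^ n) (((k : ℝ) + 1) / 2 ^ n), h x ∂μ)
      = ∫ x in Set.Ioc ((k : ℝ) / 2 ^ n) (((k : ℝ) + 1) / 2 ^ n), g x ∂μ := by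
    intro k hk
    have hkr := Finset.mem_range.1 hk
    rw [hμI k hkr]
    rw [setIntegral_congr_fun (hIk_meas k) (hatom k hk), setIntegral_const, measureReal_def, hvolI k,
      ENNReal.toReal_ofReal (by positivity)]
    have hgval : (∫ x in Set.Ioc ((k : ℝ) / 2 ^ n) (((k : ℝ) + 1) / 2 ^ n), g x) = c k / 2^n := by
      simp only [hcdef]
      field_simp
    rw [hgval, smul_eq_mul]
    ring
  have huniv : ∫ x, h x ∂μ = ∫ x, g x ∂μ := by
    have h2 : μ.restrict (Set.Ioc (0:ℝ) 1) = μ := by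
      rw [hμdef, Measure.restrict_restrict measurableSet_Ioc, Set.inter_self]
    have hbU := integral_biUnion_finset (Finset.range (2^n)) (f := h) (μ := μ)
      (fun k _ => hIk_meas k) (dyadic_disj n) (fun k _ => hIntH.integrableOn)
    have hgU := integral_biUnion_finset (Finset.range (2^n)) (f := g) (μ := μ)
      (fun k _ => hIk_meas k) (dyadic_disj n) (fun k _ => hg1.integrableOn)
    calc ∫ x, h x ∂μ = ∫ x in Set.Ioc (0:ℝ) 1, h x ∂μ := by rw [h2]
      _ = ∫ x in ⋃ k ∈ Finset.range (2^n),
            Set.Ioc ((k : ℝ) / 2 ^ n) (((k : ℝ) + 1) / 2 ^ n), h x ∂μ := by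
          rw [← dyadic_cover n]
      _ = ∑ k ∈ Finset.range (2^n),
            ∫ x in Set.Ioc ((k : ℝ) / 2 ^ n) (((k : ℝ) + 1) / 2 ^ n), h x ∂μ := hbU
      _ = ∑ k ∈ Finset.range (2^n),
            ∫ x in Set.Ioc ((k : ℝ) / 2 ^ n) (((k : ℝ) + 1) / 2 ^ n), g x ∂μ :=
          Finset.sum_congr rfl hbasic
      _ = ∫ x in ⋃ k ∈ Finset.range (2^n),
            Set.Ioc ((k : ℝ) / 2 ^ n) (((k : ℝ) + 1) / 2 ^ n), g x ∂μ := hgU.symm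
      _ = ∫ x in Set.Ioc (0:ℝ) 1, g x ∂μ := by rw [← dyadic_cover n]
      _ = ∫ x, g x ∂μ := by rw [h2]
  have heq : ∀ s : Set ℝ, MeasurableSet[dyadicSigma n] s →
      ∫ x in s, h x ∂μ = ∫ x in s, g x ∂μ := by
    have hpi : IsPiSystem {s : Set ℝ | ∃ k : ℕ, k < 2 ^ n ∧
        s = Set.Ioc ((k : ℝ) / 2 ^ n) (((k : ℝ) + 1) / 2 ^ n)} := by
      rintro s ⟨j, hj, rfl⟩ t ⟨k, hk, rfl⟩ hst
      rcases eq_or_ne j k with rfl | hjk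
      · rw [Set.inter_self]; exact ⟨j, hj, rfl⟩
      · exact absurd (Set.disjoint_iff_inter_eq_empty.1
          (dyadic_disj n (Finset.mem_range.2 hj) (Finset.mem_range.2 hk) hjk))
          (Set.nonempty_iff_ne_empty.1 hst)
    have key := @MeasurableSpace.induction_on_inter ℝ (dyadicSigma n)
      (fun s _ => ∫ x in s, h x ∂μ = ∫ x in s, g x ∂μ)
      {s : Set ℝ | ∃ k : ℕ, k < 2 ^ n ∧
        s = Set.Ioc ((k : ℝ) / 2 ^ n) (((k : ℝ) + 1) / 2 ^ n)}
      rfl hpi (by simp)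
      (by rintro t ⟨k, hk, rfl⟩; exact hbasic k (Finset.mem_range.2 hk))
      (by
        intro t ht hCt
        have ht' : MeasurableSet t := hle t ht
        have e1 := integral_add_compl ht' hIntH
        have e2 := integral_add_compl ht' hg1
        linarith [huniv])
      (by
        intro s hd hsm hC
        rw [integral_iUnion (fun i => hle _ (hsm i)) hd hIntH.integrableOn,
            integral_iUnion (fun i => hle _ (hsm i)) hd hg1.integrableOn]
        exact tsum_congr hC)
    exact fun s hs => key s hs
  have hsm : AEStronglyMeasurable[dyadicSigma n] h μ := by
    refine StronglyMeasurable.aestronglyMeasurable ?_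
    apply Finset.stronglyMeasurable_fun_sum
    intro k hk
    exact stronglyMeasurable_const.indicator
      (MeasurableSpace.measurableSet_generateFrom ⟨k, Finset.mem_range.1 hk, rfl⟩)
  have hcond : h =ᵐ[μ] μ[g | dyadicSigma n] :=
    ae_eq_condExp_of_forall_setIntegral_eq hle hg1
      (fun s _ _ => hIntH.integrableOn) (fun s hs _ => heq s hs) hsm
  rw [← eLpNorm_congr_ae hcond]
  have hbθ : ∀ k : ℕ, b k ≤ b k + θ := fun k => by linarith
  have hJ : ∀ k : ℕ, (‖∫ x in (b k)..(b k + θ), f x‖₊ : ℝ≥0∞)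
      ≤ ∫⁻ x in Set.Ioc (b k) (b k + θ), (‖f x‖₊ : ℝ≥0∞) ∂volume := by
    intro k
    rw [intervalIntegral.integral_of_le (hbθ k)]
    exact enorm_integral_le_lintegral_enorm _
  have hcnorm : ∀ k : ℕ, (‖c k‖₊ : ℝ≥0∞)
      = ENNReal.ofReal ((2:ℝ)^n / m) * (‖∫ x in (b k)..(b k + θ), f x‖₊ : ℝ≥0∞) := by
    intro k
    rw [hck k, nnnorm_mul, ENNReal.coe_mul]
    congr 1
    exact Real.enorm_eq_ofReal (by positivity)
  have hvolθ : ∀ k : ℕ, volume (Set.Ioc (b k) (b k + θ)) ≤ 1 := by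
    intro k
    rw [Real.volume_Ioc]
    refine le_trans (ENNReal.ofReal_le_one.2 (by linarith)) le_rfl
  rcases eq_or_ne p ∞ with rfl | hptop
  · -- p = ∞
    have hEb := perAE hper
    have hcle : ∀ k : ℕ, (‖c k‖₊ : ℝ≥0∞)
        ≤ ENNReal.ofReal ((2:ℝ)^n / m) * eLpNormEssSup f μ := by
      intro k
      rw [hcnorm k]
      refine mul_le_mul_right ((hJ k).trans ?_) _
      calc (∫⁻ x in Set.Ioc (b k) (b k + θ), (‖f x‖₊:ℝ≥0∞) ∂volume)
          ≤ ∫⁻ _ in Set.Ioc (b k) (b k + θ), eLpNormEssSup f μ ∂volume :=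
            lintegral_mono_ae (ae_restrict_of_ae (by rw [hμdef]; exact hEb))
        _ = eLpNormEssSup f μ * volume (Set.Ioc (b k) (b k + θ)) := setLIntegral_const _ _
        _ ≤ eLpNormEssSup f μ * 1 := mul_le_mul_right (hvolθ k) _
        _ = _ := mul_one _
    have hhb : ∀ᵐ x ∂μ, (fun y => (‖h y‖₊ : ℝ≥0∞)) x
        ≤ ENNReal.ofReal ((2:ℝ)^n / m) * eLpNormEssSup f μ := by
      rw [hμdef]
      refine (ae_restrict_iff' measurableSet_Ioc).2 (ae_of_all _ fun x hx => ?_)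
      rw [dyadic_cover n] at hx
      simp only [Set.mem_iUnion, exists_prop] at hx
      obtain ⟨k, hk, hxk⟩ := hx
      show (‖h x‖₊ : ℝ≥0∞) ≤ _
      rw [hatom k hk hxk]
      exact hcle k
    rw [eLpNorm_exponent_top, eLpNorm_exponent_top]
    exact essSup_le_of_ae_le _ hhb
  · -- p finite
    have hq1 : 1 ≤ p.toReal := by
      have := ENNReal.toReal_mono hptop hp
      simpa using this
    have hqpos : 0 < p.toReal := lt_of_lt_of_le zero_lt_one hq1
    have hq0 : p.toReal ≠ 0 := ne_of_gt hqpos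
    have hFper : Function.Periodic (fun x : ℝ => (‖f x‖₊ : ℝ≥0∞) ^ p.toReal) 1 := by
      intro x; simp [hper x]
    have hfk : ∀ k : ℕ, eLpNorm f p (volume.restrict (Set.Ioc (b k) (b k + θ)))
        ≤ eLpNorm f p μ := by
      intro k
      rw [hμdef, eLpNorm_eq_lintegral_rpow_enorm_toReal hp0 hptop,
        eLpNorm_eq_lintegral_rpow_enorm_toReal hp0 hptop]
      exact ENNReal.rpow_le_rpow (perLe hFper hθ1) (by positivity)
    have hcle : ∀ k : ℕ, (‖c k‖₊ : ℝ≥0∞) ≤ ENNReal.ofReal ((2:ℝ)^n / m) * eLpNorm f p μ := by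
      intro k
      rw [hcnorm k]
      refine mul_le_mul_right ?_ _
      have hmeasf : AEStronglyMeasurable f (volume.restrict (Set.Ioc (b k) (b k + θ))) :=
        ((hIf (b k) (b k + θ)).1).aestronglyMeasurable
      calc (‖∫ x in (b k)..(b k + θ), f x‖₊ : ℝ≥0∞)
          ≤ ∫⁻ x in Set.Ioc (b k) (b k + θ), (‖f x‖₊:ℝ≥0∞) ∂volume := hJ k
        _ = eLpNorm f 1 (volume.restrict (Set.Ioc (b k) (b k + θ))) :=
            (eLpNorm_one_eq_lintegral_enorm (f := f)).symm
        _ ≤ eLpNorm f p (volume.restrict (Set.Ioc (b k) (b k + θ)))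
              * (volume.restrict (Set.Ioc (b k) (b k + θ))) Set.univ
                ^ (1/(1:ℝ≥0∞).toReal - 1/p.toReal) :=
            eLpNorm_le_eLpNorm_mul_rpow_measure_univ hp hmeasf
        _ ≤ eLpNorm f p (volume.restrict (Set.Ioc (b k) (b k + θ))) * 1 := by
            refine mul_le_mul_right (ENNReal.rpow_le_one ?_ ?_) _
            · rw [Measure.restrict_apply_univ]
              exact hvolθ k
            · simp only [ENNReal.toReal_one]
              have : 1/p.toReal ≤ 1 := by
                rw [div_le_one hqpos]; exact hq1
              linarith
        _ = eLpNorm f p (volume.restrict (Set.Ioc (b k) (b k + θ))) := mul_one _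
        _ ≤ eLpNorm f p μ := hfk k
    rw [eLpNorm_eq_lintegral_rpow_enorm_toReal hp0 hptop]
    have hkey : (∫⁻ x, (‖h x‖₊:ℝ≥0∞) ^ p.toReal ∂μ)
        = ∑ k ∈ Finset.range (2^n),
            (‖c k‖₊:ℝ≥0∞) ^ p.toReal * ENNReal.ofReal ((2^n : ℝ)⁻¹) := by
      rw [hμdef]
      calc (∫⁻ x in Set.Ioc (0:ℝ) 1, (‖h x‖₊:ℝ≥0∞) ^ p.toReal ∂volume)
          = ∫⁻ x in ⋃ k ∈ Finset.range (2^n),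
              Set.Ioc ((k : ℝ) / 2 ^ n) (((k : ℝ) + 1) / 2 ^ n),
              (‖h x‖₊:ℝ≥0∞) ^ p.toReal ∂volume := by rw [← dyadic_cover n]
        _ = ∑ k ∈ Finset.range (2^n), ∫⁻ x in Set.Ioc ((k : ℝ) / 2 ^ n) (((k : ℝ) + 1) / 2 ^ n),
              (‖h x‖₊:ℝ≥0∞) ^ p.toReal ∂volume :=
            lintegral_biUnion_finset (dyadic_disj n) (fun k _ => hIk_meas k) _
        _ = ∑ k ∈ Finset.range (2^n),
              (‖c k‖₊:ℝ≥0∞) ^ p.toReal * ENNReal.ofReal ((2^n:ℝ)⁻¹) := by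
            refine Finset.sum_congr rfl fun k hk => ?_
            rw [setLIntegral_congr_fun (hIk_meas k)
              (fun x hx => by rw [hatom k hk hx]), setLIntegral_const, hvolI k]
    rw [show (∫⁻ x, ‖h x‖ₑ ^ p.toReal ∂μ) = _ from hkey]
    have hsum : (∑ k ∈ Finset.range (2^n),
          (‖c k‖₊:ℝ≥0∞) ^ p.toReal * ENNReal.ofReal ((2^n:ℝ)⁻¹))
        ≤ (ENNReal.ofReal ((2:ℝ)^n / m) * eLpNorm f p μ) ^ p.toReal := by
      calc ∑ k ∈ Finset.range (2^n), (‖c k‖₊:ℝ≥0∞) ^ p.toReal * ENNReal.ofReal ((2^n:ℝ)⁻¹)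
          ≤ ∑ k ∈ Finset.range (2^n),
              (ENNReal.ofReal ((2:ℝ)^n / m) * eLpNorm f p μ) ^ p.toReal
                * ENNReal.ofReal ((2^n:ℝ)⁻¹) :=
            Finset.sum_le_sum fun k _ => mul_le_mul_left
              (ENNReal.rpow_le_rpow (hcle k) (le_of_lt hqpos)) _
        _ = (2^n : ℕ) • ((ENNReal.ofReal ((2:ℝ)^n / m) * eLpNorm f p μ) ^ p.toReal
              * ENNReal.ofReal ((2^n:ℝ)⁻¹)) := by
            rw [Finset.sum_const, Finset.card_range]
        _ = (ENNReal.ofReal ((2:ℝ)^n / m) * eLpNorm f p μ) ^ p.toReal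
              * (((2^n : ℕ) : ℝ≥0∞) * ENNReal.ofReal ((2^n:ℝ)⁻¹)) := by
            rw [nsmul_eq_mul]; ring
        _ = (ENNReal.ofReal ((2:ℝ)^n / m) * eLpNorm f p μ) ^ p.toReal := by
            have hone : ((2^n : ℕ) : ℝ≥0∞) * ENNReal.ofReal ((2^n:ℝ)⁻¹) = 1 := by
              have hc2 : ((2^n : ℕ) : ℝ≥0∞) = ENNReal.ofReal ((2:ℝ)^n) := by
                rw [← ENNReal.ofReal_natCast]
                norm_num
              rw [hc2, ← ENNReal.ofReal_mul (by positivity),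
                mul_inv_cancel₀ (ne_of_gt hN0), ENNReal.ofReal_one]
            rw [hone, mul_one]
    calc (∑ k ∈ Finset.range (2^n),
          (‖c k‖₊:ℝ≥0∞) ^ p.toReal * ENNReal.ofReal ((2^n:ℝ)⁻¹)) ^ (1/p.toReal)
        ≤ ((ENNReal.ofReal ((2:ℝ)^n / m) * eLpNorm f p μ) ^ p.toReal) ^ (1/p.toReal) :=
          ENNReal.rpow_le_rpow hsum (by positivity)
      _ = ENNReal.ofReal ((2:ℝ)^n / m) * eLpNorm f p μ := by
          rw [← ENNReal.rpow_mul, mul_one_div, div_self hq0, ENNReal.rpow_one]
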